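/- arXiv:1409.0837 — 5 statements merged into one kernel-verified Lean document; each statement's English description precedes it below -/
import Mathlib

section
/- For n ≥ 2, the commutative square of simplicial sets with corners N(Λ^0), N(Λ^{n-1}), N(Λ^1), N(Λ^n) — where N(Λ^{n-1}) → N(Λ^n) is induced by the inert inclusion [n−1] → [n] hitting {0,...,n−1}, N(Λ^1) → N(Λ^n) is induced by the inert inclusion [1] → [n] hitting {n−1,n}, and both maps out of N(Λ^0) = Δ^0 pick out the vertex (n−1,n−1) — is a pushout square in the category of simplicial sets. -/
open CategoryTheory Limits

/-- The poset `Λ^k`: pairs `(i,j)` with `0 ≤ i ≤ j ≤ k` and `j − i ≤ 1`, ordered by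
`(i,j) ≤ (i',j')` iff `i ≤ i'` and `j' ≤ j`. -/
def LambdaP (k : ℕ) : Type :=
  {p : Fin (k+1) × Fin (k+1) // p.1 ≤ p.2 ∧ (p.2 : ℕ) ≤ (p.1 : ℕ) + 1}

instance (k : ℕ) : PartialOrder (LambdaP k) where
  le p q := p.1.1 ≤ q.1.1 ∧ q.1.2 ≤ p.1.2
  le_refl p := ⟨le_refl _, le_refl _⟩
  le_trans p q r h h' := ⟨h.1.trans h'.1, h'.2.trans h.2⟩
  le_antisymm p q h h' :=
    Subtype.ext (Prod.ext (le_antisymm h.1 h'.1) (le_antisymm h'.2 h.2))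

/-- We write `n = m + 2` for the hypothesis `n ≥ 2`.
The map `Λ^{n-1} → Λ^n` induced by the inert inclusion `[n−1] → [n]` hitting
`{0, ..., n−1}`. -/
def lambdaIncl₁ (m : ℕ) (p : LambdaP (m+1)) : LambdaP (m+2) :=
  ⟨(⟨(p.1.1 : ℕ), by have := p.1.1.isLt; omega⟩, ⟨(p.1.2 : ℕ), by have := p.1.2.isLt; omega⟩),
    ⟨Fin.mk_le_mk.mpr p.2.1, p.2.2⟩⟩

lemma lambdaIncl₁_monotone (m : ℕ) : Monotone (lambdaIncl₁ m) := by
  intro p q h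
  exact ⟨Fin.mk_le_mk.mpr h.1, Fin.mk_le_mk.mpr h.2⟩

/-- The map `Λ^1 → Λ^n` induced by the inert inclusion `[1] → [n]` hitting
`{n−1, n}`, i.e. `i ↦ (n−1) + i`. -/
def lambdaIncl₂ (m : ℕ) (p : LambdaP 1) : LambdaP (m+2) :=
  ⟨(⟨m + 1 + (p.1.1 : ℕ), by have := p.1.1.isLt; omega⟩,
    ⟨m + 1 + (p.1.2 : ℕ), by have := p.1.2.isLt; omega⟩),
    ⟨Fin.mk_le_mk.mpr (Nat.add_le_add_left p.2.1 (m+1)),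
      by have h := p.2.2; simp only [Fin.mk_le_mk]; omega⟩⟩

lemma lambdaIncl₂_monotone (m : ℕ) : Monotone (lambdaIncl₂ m) := by
  intro p q h
  exact ⟨Fin.mk_le_mk.mpr (Nat.add_le_add_left h.1 (m+1)),
    Fin.mk_le_mk.mpr (Nat.add_le_add_left h.2 (m+1))⟩

/-- The map `Λ^0 → Λ^{n-1}` picking out the vertex `(n−1, n−1)`. -/
def lambdaVert₁ (m : ℕ) (_ : LambdaP 0) : LambdaP (m+1) :=
  ⟨(Fin.last (m+1), Fin.last (m+1)), ⟨le_refl _, by simp⟩⟩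

/-- The map `Λ^0 → Λ^1` picking out the vertex `(0, 0)` (which is sent to
`(n−1, n−1)` by the inclusion `Λ^1 → Λ^n`). -/
def lambdaVert₂ (_ : LambdaP 0) : LambdaP 1 :=
  ⟨(⟨0, by omega⟩, ⟨0, by omega⟩), ⟨le_refl _, by simp⟩⟩

/-- The functors of posets, regarded as morphisms in `Cat`. -/
lemma lambdaVert₁_monotone (m : ℕ) : Monotone (lambdaVert₁ m) := fun _ _ _ => le_refl _

lemma lambdaVert₂_monotone : Monotone lambdaVert₂ := fun _ _ _ => le_refl _

def vertFunctor₁ (m : ℕ) : Cat.of (LambdaP 0) ⟶ Cat.of (LambdaP (m+1)) :=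
  ((lambdaVert₁_monotone m).functor).toCatHom

def vertFunctor₂ (m : ℕ) : Cat.of (LambdaP 0) ⟶ Cat.of (LambdaP 1) :=
  (lambdaVert₂_monotone.functor).toCatHom

def inclFunctor₁ (m : ℕ) : Cat.of (LambdaP (m+1)) ⟶ Cat.of (LambdaP (m+2)) :=
  ((lambdaIncl₁_monotone m).functor).toCatHom

def inclFunctor₂ (m : ℕ) : Cat.of (LambdaP 1) ⟶ Cat.of (LambdaP (m+2)) :=
  ((lambdaIncl₂_monotone m).functor).toCatHom


namespace LambdaAux

open CategoryTheory Limits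

lemma lam_le_iff {n : ℕ} {p q : LambdaP n} :
    p ≤ q ↔ ((p.1.1 : ℕ) ≤ (q.1.1 : ℕ) ∧ (q.1.2 : ℕ) ≤ (p.1.2 : ℕ)) := Iff.rfl

lemma lam_prop {n : ℕ} (p : LambdaP n) :
    (p.1.1 : ℕ) ≤ (p.1.2 : ℕ) ∧ (p.1.2 : ℕ) ≤ (p.1.1 : ℕ) + 1 := ⟨p.2.1, p.2.2⟩

lemma lam_ext {n : ℕ} {p q : LambdaP n} (h1 : (p.1.1 : ℕ) = (q.1.1 : ℕ))
    (h2 : (p.1.2 : ℕ) = (q.1.2 : ℕ)) : p = q :=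
  Subtype.ext (Prod.ext (Fin.ext h1) (Fin.ext h2))

lemma thin_ext {P Q : Type*} [Preorder P] [Preorder Q] {F G : P ⥤ Q}
    (h : ∀ x, F.obj x = G.obj x) : F = G :=
  CategoryTheory.Functor.ext h (fun _ _ _ => Subsingleton.elim _ _)

lemma obj_mono {P Q : Type*} [Preorder P] [Preorder Q] (F : P ⥤ Q) : Monotone F.obj :=
  fun _ _ h => leOfHom (F.map (homOfLE h))

/-- Restriction of a simplex with all second coordinates `≤ m+1` to `Λ^{m+1}`. -/
def restr₁ (m : ℕ) {k : ℕ} (F : Fin (k+1) ⥤ LambdaP (m+2))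
    (h : ∀ i, ((F.obj i).1.2 : ℕ) ≤ m+1) : Fin (k+1) ⥤ LambdaP (m+1) :=
  Monotone.functor (f := fun i =>
    (⟨(⟨((F.obj i).1.1 : ℕ), by have := (lam_prop (F.obj i)).1; have := h i; omega⟩,
       ⟨((F.obj i).1.2 : ℕ), by have := h i; omega⟩),
      ⟨Fin.mk_le_mk.mpr (lam_prop (F.obj i)).1, (lam_prop (F.obj i)).2⟩⟩ : LambdaP (m+1)))
    (fun a b hab => by
      have h' := lam_le_iff.mp (obj_mono F hab)
      exact ⟨Fin.mk_le_mk.mpr h'.1, Fin.mk_le_mk.mpr h'.2⟩)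

/-- Restriction of a simplex with all first coordinates `≥ m+1` to `Λ^1`. -/
def restr₂ (m : ℕ) {k : ℕ} (F : Fin (k+1) ⥤ LambdaP (m+2))
    (h : ∀ i, m+1 ≤ ((F.obj i).1.1 : ℕ)) : Fin (k+1) ⥤ LambdaP 1 :=
  Monotone.functor (f := fun i =>
    (⟨(⟨((F.obj i).1.1 : ℕ) - (m+1), by have := (F.obj i).1.1.isLt; omega⟩,
       ⟨((F.obj i).1.2 : ℕ) - (m+1), by have := (F.obj i).1.2.isLt; omega⟩),
      ⟨Fin.mk_le_mk.mpr (by have := (lam_prop (F.obj i)).1; have := h i; omega),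
       by
        have h1 := (lam_prop (F.obj i)).2
        have h2 := h i
        show ((F.obj i).1.2 : ℕ) - (m+1) ≤ (((F.obj i).1.1 : ℕ) - (m+1)) + 1
        omega⟩⟩ : LambdaP 1))
    (fun a b hab => by
      have h' := lam_le_iff.mp (obj_mono F hab)
      have ha := h a; have hb := h b
      have hpa := (lam_prop (F.obj a)).1; have hpb := (lam_prop (F.obj b)).1
      exact ⟨Fin.mk_le_mk.mpr (by omega), Fin.mk_le_mk.mpr (by omega)⟩)

lemma keyDichotomy (m : ℕ) {k : ℕ} (F : Fin (k+1) ⥤ LambdaP (m+2))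
    (h : ¬ ∀ i, ((F.obj i).1.2 : ℕ) ≤ m+1) : ∀ i, m+1 ≤ ((F.obj i).1.1 : ℕ) := by
  push_neg at h
  obtain ⟨i₀, hi₀⟩ := h
  intro i
  rcases le_total i i₀ with hle | hle
  · have h1 := lam_le_iff.mp (obj_mono F hle)
    have h2 := (lam_prop (F.obj i)).2
    omega
  · have h1 := lam_le_iff.mp (obj_mono F hle)
    have h2 := (lam_prop (F.obj i₀)).2
    omega

/-- The unique element of `Λ^0`. -/
def pt0 : LambdaP 0 := ⟨(0, 0), ⟨le_refl _, by simp⟩⟩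

/-- The constant functor at `pt0`. -/
def constPt0 (k : ℕ) : Fin (k+1) ⥤ LambdaP 0 :=
  Monotone.functor (f := fun _ => pt0) monotone_const

end LambdaAux

/-- For `n = m + 2 ≥ 2`, the commutative square of simplicial sets
`N(Λ^0) → N(Λ^{n−1})`, `N(Λ^0) → N(Λ^1)`, `N(Λ^{n−1}) → N(Λ^n)`, `N(Λ^1) → N(Λ^n)`
— where the maps into `N(Λ^n)` are induced by the inert inclusions `[n−1] → [n]`
(hitting `{0,...,n−1}`) and `[1] → [n]` (hitting `{n−1,n}`), and both maps out of
`N(Λ^0) = Δ^0` pick out the vertex `(n−1,n−1)` — is a pushout square in the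
category of simplicial sets. -/
theorem lambda_nerve_isPushout (m : ℕ) :
    IsPushout
      (nerveFunctor.map (vertFunctor₁ m))
      (nerveFunctor.map (vertFunctor₂ m))
      (nerveFunctor.map (inclFunctor₁ m))
      (nerveFunctor.map (inclFunctor₂ m)) := by
  have hc : vertFunctor₁ m ≫ inclFunctor₁ m = vertFunctor₂ m ≫ inclFunctor₂ m :=
    Cat.Hom.ext (LambdaAux.thin_ext (P := LambdaP 0) (Q := LambdaP (m+2)) (fun x => LambdaAux.lam_ext rfl rfl))
  have sq : CommSq (nerveFunctor.map (vertFunctor₁ m)) (nerveFunctor.map (vertFunctor₂ m))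
      (nerveFunctor.map (inclFunctor₁ m)) (nerveFunctor.map (inclFunctor₂ m)) :=
    ⟨by rw [← Functor.map_comp, ← Functor.map_comp, hc]⟩
  refine IsPushout.of_isColimit' sq ?_
  apply evaluationJointlyReflectsColimits
  intro Δ
  refine (isColimitMapCoconePushoutCoconeEquiv
    ((evaluation SimplexCategoryᵒᵖ (Type 0)).obj Δ) sq.w).symm ?_
  refine PushoutCocone.IsColimit.mk _ (fun s => TypeCat.ofHom fun G =>
      if h : ∀ i, ((G.obj i).1.2 : ℕ) ≤ m+1
      then s.inl (LambdaAux.restr₁ m G h)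
      else s.inr (LambdaAux.restr₂ m G (LambdaAux.keyDichotomy m G h))) ?_ ?_ ?_
  · intro s
    ext A
    show (if h : _ then _ else _) = s.inl A
    split_ifs with h
    · exact congrArg s.inl (LambdaAux.thin_ext
        (P := Fin (Δ.unop.len+1)) (Q := LambdaP (m+1)) (fun i => LambdaAux.lam_ext rfl rfl))
    · exact absurd (fun i => Nat.lt_succ_iff.mp (A.obj i).1.2.isLt) h
  · intro s
    ext B
    show (if h : _ then _ else _) = s.inr B
    split_ifs with h
    · have hz : ∀ i, ((B.obj i).1.2 : ℕ) = 0 := fun i => by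
        have h' : m+1+((B.obj i).1.2 : ℕ) ≤ m+1 := h i
        omega
      have hz1 : ∀ i, ((B.obj i).1.1 : ℕ) = 0 := fun i => by
        have := (LambdaAux.lam_prop (B.obj i)).1; have := hz i; omega
      have e1 : LambdaAux.restr₁ m _ h =
          ((vertFunctor₁ m).toFunctor.mapComposableArrows _).obj (LambdaAux.constPt0 Δ.unop.len) :=
        LambdaAux.thin_ext (P := Fin (Δ.unop.len+1)) (Q := LambdaP (m+1)) (fun i => LambdaAux.lam_ext
          (by have := hz1 i; show m+1+((B.obj i).1.1 : ℕ) = ((Fin.last (m+1) : Fin (m+2)) : ℕ); simp; omega)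
          (by have := hz i; show m+1+((B.obj i).1.2 : ℕ) = ((Fin.last (m+1) : Fin (m+2)) : ℕ); simp; omega))
      have e2 : ((vertFunctor₂ m).toFunctor.mapComposableArrows _).obj (LambdaAux.constPt0 Δ.unop.len) = B :=
        LambdaAux.thin_ext (P := Fin (Δ.unop.len+1)) (Q := LambdaP 1) (fun i => LambdaAux.lam_ext
          (by have := hz1 i; show (0 : ℕ) = ((B.obj i).1.1 : ℕ); omega)
          (by have := hz i; show (0 : ℕ) = ((B.obj i).1.2 : ℕ); omega))
      rw [e1, ← e2]
      exact ConcreteCategory.congr_hom s.condition (LambdaAux.constPt0 Δ.unop.len)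
    · refine congrArg s.inr (LambdaAux.thin_ext
        (P := Fin (Δ.unop.len+1)) (Q := LambdaP 1) (fun i => LambdaAux.lam_ext ?_ ?_))
      · show m+1+((B.obj i).1.1 : ℕ) - (m+1) = ((B.obj i).1.1 : ℕ); omega
      · show m+1+((B.obj i).1.2 : ℕ) - (m+1) = ((B.obj i).1.2 : ℕ); omega
  · intro s w h₁ h₂
    ext G
    show w G = (if h : _ then _ else _)
    split_ifs with h
    · have e : G = ((inclFunctor₁ m).toFunctor.mapComposableArrows _).obj (LambdaAux.restr₁ m G h) :=
        LambdaAux.thin_ext (P := Fin (Δ.unop.len+1)) (Q := LambdaP (m+2))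
          (fun i => LambdaAux.lam_ext rfl rfl)
      conv_lhs => rw [e]
      exact ConcreteCategory.congr_hom h₁ (LambdaAux.restr₁ m G h)
    · have hk := LambdaAux.keyDichotomy m G h
      have e : G = ((inclFunctor₂ m).toFunctor.mapComposableArrows _).obj (LambdaAux.restr₂ m G hk) :=
        LambdaAux.thin_ext (P := Fin (Δ.unop.len+1)) (Q := LambdaP (m+2)) (fun i => LambdaAux.lam_ext
          (by have := hk i; show ((G.obj i).1.1 : ℕ) = m+1+(((G.obj i).1.1 : ℕ) - (m+1)); omega)
          (by have := hk i; have := (LambdaAux.lam_prop (G.obj i)).1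
              show ((G.obj i).1.2 : ℕ) = m+1+(((G.obj i).1.2 : ℕ) - (m+1)); omega))
      conv_lhs => rw [e]
      exact ConcreteCategory.congr_hom h₂ (LambdaAux.restr₂ m G hk)
end

section
/- Let C be a category with pullbacks and let Span(C) be the category of isomorphism classes of spans in C. Then a span X ← f − A − g → Y represents an isomorphism in Span(C) if and only if both f : A → X and g : A → Y are isomorphisms in C. -/
open CategoryTheory Limits

/-- A span from `X` to `Y` in `C`: a diagram `X ← A → Y`. -/
structure SpanC (C : Type*) [Category C] (X Y : C) where
  mid : C
  left : mid ⟶ X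
  right : mid ⟶ Y

/-- Two spans are isomorphic if there is an isomorphism of their middle objects
commuting with the legs. -/
def SpanEquiv {C : Type*} [Category C] {X Y : C} (s t : SpanC C X Y) : Prop :=
  ∃ e : s.mid ≅ t.mid, e.hom ≫ t.left = s.left ∧ e.hom ≫ t.right = s.right

/-- The identity span `X ← X → X` with both legs the identity. -/
def idSpan {C : Type*} [Category C] (X : C) : SpanC C X X := ⟨X, 𝟙 X, 𝟙 X⟩

/-- The composite of two spans, given by a pullback: `X ← A ×_Y B → Z`. -/
noncomputable def compSpan {C : Type*} [Category C] [HasPullbacks C] {X Y Z : C}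
    (s : SpanC C X Y) (t : SpanC C Y Z) : SpanC C X Z :=
  ⟨pullback s.right t.left,
    pullback.fst s.right t.left ≫ s.left,
    pullback.snd s.right t.left ≫ t.right⟩

/-- A span `X ← A → Y` represents an isomorphism in `Span(C)` (i.e. admits an inverse
span up to isomorphism of spans) if and only if both of its legs are isomorphisms
in `C`. -/
theorem span_isIso_iff {C : Type*} [Category C] [HasPullbacks C] {X Y : C}
    (s : SpanC C X Y) :
    (∃ t : SpanC C Y X,
        SpanEquiv (compSpan s t) (idSpan X) ∧ SpanEquiv (compSpan t s) (idSpan Y)) ↔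
      (IsIso s.left ∧ IsIso s.right) := by
  obtain ⟨A, f, g⟩ := s
  constructor
  · rintro ⟨⟨B, h, k⟩, ⟨e, he1, he2⟩, ⟨φ, hφ1, hφ2⟩⟩
    simp only [compSpan, idSpan, Category.comp_id] at he1 he2 hφ1 hφ2 e φ
    -- sections
    set σ := e.inv ≫ pullback.fst g h with hσdef
    set τ := e.inv ≫ pullback.snd g h with hτdef
    set σ2 := φ.inv ≫ pullback.fst k f with hσ2def
    set ρ := φ.inv ≫ pullback.snd k f with hρdef
    have hσ : σ ≫ f = 𝟙 X := by
      rw [hσdef, Category.assoc, ← he1, e.inv_hom_id]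
    have hτ : τ ≫ k = 𝟙 X := by
      rw [hτdef, Category.assoc, ← he2, e.inv_hom_id]
    have hσ2 : σ2 ≫ h = 𝟙 Y := by
      rw [hσ2def, Category.assoc, ← hφ1, φ.inv_hom_id]
    have hρ : ρ ≫ g = 𝟙 Y := by
      rw [hρdef, Category.assoc, ← hφ2, φ.inv_hom_id]
    have hfsplit : IsSplitEpi f := ⟨⟨⟨σ, hσ⟩⟩⟩
    have hgsplit : IsSplitEpi g := ⟨⟨⟨ρ, hρ⟩⟩⟩
    have hfmono : Mono f := by
      constructor
      intro W a b hab
      have ca : a ≫ g = (a ≫ g ≫ σ2) ≫ h := by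
        rw [Category.assoc, Category.assoc, hσ2, Category.comp_id]
      have cb : b ≫ g = (b ≫ g ≫ σ2) ≫ h := by
        rw [Category.assoc, Category.assoc, hσ2, Category.comp_id]
      set za := pullback.lift a (a ≫ g ≫ σ2) ca with hza
      set zb := pullback.lift b (b ≫ g ≫ σ2) cb with hzb
      have hez : za ≫ e.hom = zb ≫ e.hom := by
        rw [he1, ← Category.assoc, ← Category.assoc, hza, hzb,
          pullback.lift_fst, pullback.lift_fst, hab]
      have hzz : za = zb := (cancel_mono e.hom).mp hez
      calc a = za ≫ pullback.fst g h := by rw [hza, pullback.lift_fst]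
        _ = zb ≫ pullback.fst g h := by rw [hzz]
        _ = b := by rw [hzb, pullback.lift_fst]
    have hgmono : Mono g := by
      constructor
      intro W a b hab
      have ca : (a ≫ f ≫ τ) ≫ k = a ≫ f := by
        rw [Category.assoc, Category.assoc, hτ, Category.comp_id]
      have cb : (b ≫ f ≫ τ) ≫ k = b ≫ f := by
        rw [Category.assoc, Category.assoc, hτ, Category.comp_id]
      set wa := pullback.lift (a ≫ f ≫ τ) a ca with hwa
      set wb := pullback.lift (b ≫ f ≫ τ) b cb with hwb
      have hew : wa ≫ φ.hom = wb ≫ φ.hom := by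
        rw [hφ2, ← Category.assoc, ← Category.assoc, hwa, hwb,
          pullback.lift_snd, pullback.lift_snd, hab]
      have hww : wa = wb := (cancel_mono φ.hom).mp hew
      calc a = wa ≫ pullback.snd k f := by rw [hwa, pullback.lift_snd]
        _ = wb ≫ pullback.snd k f := by rw [hww]
        _ = b := by rw [hwb, pullback.lift_snd]
    exact ⟨isIso_of_mono_of_isSplitEpi f, isIso_of_mono_of_isSplitEpi g⟩
  · rintro ⟨hf, hg⟩
    have hf' : IsIso f := hf
    have hg' : IsIso g := hg
    refine ⟨⟨A, g, f⟩, ?_, ?_⟩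
    · have hfst : pullback.fst g g = pullback.snd g g :=
        (cancel_mono g).mp (pullback.condition (f := g) (g := g))
      refine ⟨(asIso (pullback.fst g g ≫ f) : pullback g g ≅ X), ?_, ?_⟩
      · simp [compSpan, idSpan]
      · simp only [compSpan, idSpan, Category.comp_id, asIso_hom]
        rw [hfst]
    · have hfst : pullback.fst f f = pullback.snd f f :=
        (cancel_mono f).mp (pullback.condition (f := f) (g := f))
      refine ⟨(asIso (pullback.fst f f ≫ g) : pullback f f ≅ Y), ?_, ?_⟩
      · simp [compSpan, idSpan]
      · simp only [compSpan, idSpan, Category.comp_id, asIso_hom]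
        rw [hfst]
end

section
/- Let C be a category with pullbacks and let f : X → A and g : X → B be morphisms. Form P = X ×_B X (the pullback of g along g), Q = X ×_A X (the pullback of f along f), and R = X ×_B X ×_A X (the limit of X → B ← X → A ← X). Let u : P → R be induced by (p₁, p₂, p₂) and v : Q → R be induced by (q₁, q₁, q₂). Then the canonical map X → P ×_R Q induced by the diagonals (x ↦ ((x,x),(x,x))) is an isomorphism. -/
open CategoryTheory Limits

noncomputable section

variable {C : Type*} [Category C] [HasPullbacks C] {X A B : C}

/-- `P = X ×_B X`, the pullback of `g` along itself. -/
def P9 (g : X ⟶ B) : C := pullback g g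

/-- `Q = X ×_A X`, the pullback of `f` along itself. -/
def Q9 (f : X ⟶ A) : C := pullback f f

/-- `R = X ×_B X ×_A X`, the wide pullback: triples `(x₁,x₂,x₃)` with
`g x₁ = g x₂` and `f x₂ = f x₃`, built as `P ×_X Q` along the second and first
projections. -/
def R9 (f : X ⟶ A) (g : X ⟶ B) : C :=
  pullback (pullback.snd g g) (pullback.fst f f)

/-- `u : P → R` induced by `(p₁, p₂, p₂)`. -/
def u9 (f : X ⟶ A) (g : X ⟶ B) : P9 g ⟶ R9 f g :=
  pullback.lift (𝟙 _) (pullback.lift (pullback.snd g g) (pullback.snd g g) rfl)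
    (by exact (Category.id_comp _).trans (pullback.lift_fst ..).symm)

/-- `v : Q → R` induced by `(q₁, q₁, q₂)`. -/
def v9 (f : X ⟶ A) (g : X ⟶ B) : Q9 f ⟶ R9 f g :=
  pullback.lift (pullback.lift (pullback.fst f f) (pullback.fst f f) rfl) (𝟙 _)
    (by exact (pullback.lift_snd ..).trans (Category.id_comp _).symm)

/-- The diagonal `X → P = X ×_B X`. -/
def diagP9 (g : X ⟶ B) : X ⟶ P9 g := pullback.lift (𝟙 X) (𝟙 X) rfl

/-- The diagonal `X → Q = X ×_A X`. -/
def diagQ9 (f : X ⟶ A) : X ⟶ Q9 f := pullback.lift (𝟙 X) (𝟙 X) rfl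

lemma diag_comm9 (f : X ⟶ A) (g : X ⟶ B) :
    diagP9 g ≫ u9 f g = diagQ9 f ≫ v9 f g := by
  have hu1 : u9 f g ≫ pullback.fst (pullback.snd g g) (pullback.fst f f) = 𝟙 (pullback g g) :=
    pullback.lift_fst ..
  have hu2 : u9 f g ≫ pullback.snd (pullback.snd g g) (pullback.fst f f) =
      pullback.lift (pullback.snd g g) (pullback.snd g g) rfl := pullback.lift_snd ..
  have hv1 : v9 f g ≫ pullback.fst (pullback.snd g g) (pullback.fst f f) =
      pullback.lift (pullback.fst f f) (pullback.fst f f) rfl := pullback.lift_fst ..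
  have hv2 : v9 f g ≫ pullback.snd (pullback.snd g g) (pullback.fst f f) = 𝟙 (pullback f f) :=
    pullback.lift_snd ..
  have hP1 : diagP9 g ≫ pullback.fst g g = 𝟙 X := pullback.lift_fst ..
  have hP2 : diagP9 g ≫ pullback.snd g g = 𝟙 X := pullback.lift_snd ..
  have hQ1 : diagQ9 f ≫ pullback.fst f f = 𝟙 X := pullback.lift_fst ..
  have hQ2 : diagQ9 f ≫ pullback.snd f f = 𝟙 X := pullback.lift_snd ..
  have e : ∀ {Y Z W : C} (a : X ⟶ Y) (b : Y ⟶ Z) (c : Z ⟶ W) (d : Y ⟶ W),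
      b ≫ c = d → (a ≫ b) ≫ c = a ≫ d :=
    fun a b c d h => (Category.assoc _ _ _).trans (congrArg _ h)
  apply pullback.hom_ext
  · refine (e _ _ _ _ hu1).trans ((Category.comp_id _).trans ((?_ : diagP9 g =
      diagQ9 f ≫ pullback.lift (pullback.fst f f) (pullback.fst f f) rfl).trans
        (e _ _ _ _ hv1).symm))
    apply pullback.hom_ext
    · exact hP1.trans ((e _ _ _ _ (pullback.lift_fst ..)).trans hQ1).symm
    · exact hP2.trans ((e _ _ _ _ (pullback.lift_snd ..)).trans hQ1).symm
  · refine (e _ _ _ _ hu2).trans ((?_ : diagP9 g ≫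
      pullback.lift (pullback.snd g g) (pullback.snd g g) rfl = diagQ9 f).trans
        ((Category.comp_id _).symm.trans (e _ _ _ _ hv2).symm))
    apply pullback.hom_ext
    · exact ((e _ _ _ _ (pullback.lift_fst ..)).trans hP2).trans hQ1.symm
    · exact ((e _ _ _ _ (pullback.lift_snd ..)).trans hP2).trans hQ2.symm

/-- The canonical comparison map `X → P ×_R Q` induced by the diagonals
`x ↦ ((x,x),(x,x))` is an isomorphism. -/
theorem canonical_map_isIso (f : X ⟶ A) (g : X ⟶ B) :
    IsIso (pullback.lift (diagP9 g) (diagQ9 f) (diag_comm9 f g) :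
      X ⟶ pullback (u9 f g) (v9 f g)) := by
  set a := (pullback.fst (u9 f g) (v9 f g))
  set b := (pullback.snd (u9 f g) (v9 f g))
  have hcond : a ≫ u9 f g = b ≫ v9 f g := pullback.condition
  have hu1 : u9 f g ≫ pullback.fst (pullback.snd g g) (pullback.fst f f) = 𝟙 (pullback g g) :=
    pullback.lift_fst ..
  have hu2 : u9 f g ≫ pullback.snd (pullback.snd g g) (pullback.fst f f) =
      pullback.lift (pullback.snd g g) (pullback.snd g g) rfl := pullback.lift_snd ..
  have hv1 : v9 f g ≫ pullback.fst (pullback.snd g g) (pullback.fst f f) =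
      pullback.lift (pullback.fst f f) (pullback.fst f f) rfl := pullback.lift_fst ..
  have hv2 : v9 f g ≫ pullback.snd (pullback.snd g g) (pullback.fst f f) = 𝟙 (pullback f f) :=
    pullback.lift_snd ..
  -- component equations
  have h1 : a = b ≫ pullback.lift (pullback.fst f f) (pullback.fst f f) rfl := by
    have := congrArg (· ≫ pullback.fst (pullback.snd g g) (pullback.fst f f)) hcond
    exact (Category.comp_id a).symm.trans ((congrArg (a ≫ ·) hu1.symm).trans
      ((Category.assoc _ _ _).symm.trans (this.trans ((Category.assoc _ _ _).trans (congrArg (b ≫ ·) hv1)))))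
  have h2 : a ≫ pullback.lift (pullback.snd g g) (pullback.snd g g) rfl = b := by
    have := congrArg (· ≫ pullback.snd (pullback.snd g g) (pullback.fst f f)) hcond
    exact (congrArg (a ≫ ·) hu2.symm).trans ((Category.assoc _ _ _).symm.trans (this.trans
      ((Category.assoc _ _ _).trans ((congrArg (b ≫ ·) hv2).trans (Category.comp_id b)))))
  have ha1 : a ≫ pullback.fst g g = b ≫ pullback.fst f f := by
    rw [h1]; exact (Category.assoc _ _ _).trans (congrArg _ (pullback.lift_fst _ _ _))
  have ha2 : a ≫ pullback.snd g g = b ≫ pullback.fst f f := by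
    rw [← h2]; exact ((Category.assoc _ _ _).trans (congrArg _ (pullback.lift_fst _ _ _))).symm
  have hb2 : a ≫ pullback.snd g g = b ≫ pullback.snd f f := by
    rw [← h2]; exact ((Category.assoc _ _ _).trans (congrArg _ (pullback.lift_snd _ _ _))).symm
  have hP1 : diagP9 g ≫ pullback.fst g g = 𝟙 X := pullback.lift_fst ..
  have hP2 : diagP9 g ≫ pullback.snd g g = 𝟙 X := pullback.lift_snd ..
  have hQ1 : diagQ9 f ≫ pullback.fst f f = 𝟙 X := pullback.lift_fst ..
  have hQ2 : diagQ9 f ≫ pullback.snd f f = 𝟙 X := pullback.lift_snd ..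
  have e : ∀ {T Y Z W : C} (x : T ⟶ Y) (y : Y ⟶ Z) (z : Z ⟶ W) (d : Y ⟶ W),
      y ≫ z = d → (x ≫ y) ≫ z = x ≫ d :=
    fun x y z d h => (Category.assoc _ _ _).trans (congrArg _ h)
  refine ⟨⟨a ≫ pullback.fst g g, ?_, ?_⟩⟩
  · exact (Category.assoc _ _ _).symm.trans ((congrArg (· ≫ pullback.fst g g) (pullback.lift_fst _ _ _)).trans (pullback.lift_fst _ _ _))
  · show (a ≫ pullback.fst g g) ≫ pullback.lift (diagP9 g) (diagQ9 f) (diag_comm9 f g) = 𝟙 _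
    apply pullback.hom_ext
    · refine (e _ _ _ _ (pullback.lift_fst _ _ _)).trans (Eq.trans ?_ (Category.id_comp _).symm)
      apply pullback.hom_ext
      · exact (e _ _ _ _ hP1).trans (Category.comp_id _)
      · exact ((e _ _ _ _ hP2).trans (Category.comp_id _)).trans (ha1.trans ha2.symm)
    · refine (e _ _ _ _ (pullback.lift_snd _ _ _)).trans (Eq.trans ?_ (Category.id_comp _).symm)
      apply pullback.hom_ext
      · exact ((e _ _ _ _ hQ1).trans (Category.comp_id _)).trans ha1
      · exact ((e _ _ _ _ hQ2).trans (Category.comp_id _)).trans (ha1.trans (ha2.symm.trans hb2))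

end
end

section
/- Let φ : [m] → [n] be a monotone map, let c ∈ [n], and let x₁ ≤ x₂ in [m] satisfy φ(x₁) ≤ c ≤ φ(x₂). Consider the set S of pairs (a,b) with x₁ ≤ a ≤ b ≤ x₂, b − a ≤ 1, φ(a) ≤ c, and c ≤ φ(b), partially ordered by (a,b) ≤ (a',b') iff a ≤ a' and b' ≤ b. Then S is nonempty, and S is connected: any two elements of S are joined by a zigzag of comparable pairs within S. -/
/-- The set `S` of pairs `(a,b)` with `x₁ ≤ a ≤ b ≤ x₂`, `b − a ≤ 1`, `φ(a) ≤ c`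
and `c ≤ φ(b)`. -/
def S16 {m n : ℕ} (φ : Fin (m+1) → Fin (n+1)) (c : Fin (n+1)) (x₁ x₂ : Fin (m+1)) :
    Set (Fin (m+1) × Fin (m+1)) :=
  {p | x₁ ≤ p.1 ∧ p.1 ≤ p.2 ∧ p.2 ≤ x₂ ∧ (p.2 : ℕ) ≤ (p.1 : ℕ) + 1 ∧ φ p.1 ≤ c ∧ c ≤ φ p.2}

/-- The partial order on pairs: `(a,b) ≤ (a',b')` iff `a ≤ a'` and `b' ≤ b`. -/
def le16 {m : ℕ} (p q : Fin (m+1) × Fin (m+1)) : Prop :=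
  p.1 ≤ q.1 ∧ q.2 ≤ p.2

/-- For a monotone `φ : [m] → [n]`, `c ∈ [n]` and `x₁ ≤ x₂` with `φ(x₁) ≤ c ≤ φ(x₂)`,
the set `S` is nonempty and connected: any two elements are joined by a zigzag of
comparable pairs within `S`. -/
theorem S16_nonempty_and_connected {m n : ℕ} (φ : Fin (m+1) → Fin (n+1))
    (hφ : Monotone φ) (c : Fin (n+1)) (x₁ x₂ : Fin (m+1)) (hx : x₁ ≤ x₂)
    (h₁ : φ x₁ ≤ c) (h₂ : c ≤ φ x₂) :
    (S16 φ c x₁ x₂).Nonempty ∧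
    ∀ p ∈ S16 φ c x₁ x₂, ∀ q ∈ S16 φ c x₁ x₂,
      Relation.ReflTransGen
        (fun a b => a ∈ S16 φ c x₁ x₂ ∧ b ∈ S16 φ c x₁ x₂ ∧ (le16 a b ∨ le16 b a)) p q := by
  classical
  set Sx := S16 φ c x₁ x₂ with hSx
  set r : Fin (m+1) × Fin (m+1) → Fin (m+1) × Fin (m+1) → Prop :=
    fun a b => a ∈ Sx ∧ b ∈ Sx ∧ (le16 a b ∨ le16 b a) with hrdef
  have hrsymm : Symmetric r := by
    rintro a b ⟨ha, hb, h⟩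
    exact ⟨hb, ha, h.symm⟩
  -- the set of candidates for the first coordinate
  let T : Finset (Fin (m+1)) := Finset.univ.filter (fun a => a ≤ x₂ ∧ φ a ≤ c)
  have hx₁T : x₁ ∈ T := by simp [T, hx, h₁]
  have hTne : T.Nonempty := ⟨x₁, hx₁T⟩
  set a₀ := T.max' hTne with ha₀def
  have ha₀mem : a₀ ∈ T := T.max'_mem hTne
  have ha₀x₂ : a₀ ≤ x₂ := by
    have := Finset.mem_filter.mp ha₀mem
    exact this.2.1
  have ha₀c : φ a₀ ≤ c := by
    have := Finset.mem_filter.mp ha₀mem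
    exact this.2.2
  have hx₁a₀ : x₁ ≤ a₀ := T.le_max' _ hx₁T
  have hmax : ∀ a : Fin (m+1), a ≤ x₂ → φ a ≤ c → a ≤ a₀ := by
    intro a ha1 ha2
    exact T.le_max' a (by simp [T, ha1, ha2])
  -- a canonical element with first coordinate a₀
  obtain ⟨p₀, hp₀S, hp₀1⟩ : ∃ p₀, p₀ ∈ Sx ∧ p₀.1 = a₀ := by
    by_cases hc : c ≤ φ a₀
    · exact ⟨(a₀, a₀), ⟨hx₁a₀, le_refl _, ha₀x₂, Nat.le_succ _, ha₀c, hc⟩, rfl⟩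
    · have hne : a₀ ≠ x₂ := by
        intro h
        exact hc (h ▸ h₂)
      have hlt : (a₀ : ℕ) < (x₂ : ℕ) := by
        have := Fin.le_def.mp ha₀x₂
        have : (a₀ : ℕ) ≠ (x₂ : ℕ) := fun h => hne (Fin.ext h)
        omega
      have hx₂m : (x₂ : ℕ) < m + 1 := x₂.isLt
      set b : Fin (m+1) := ⟨(a₀ : ℕ) + 1, by omega⟩ with hbdef
      have hbx₂ : b ≤ x₂ := by rw [Fin.le_def]; simpa [hbdef] using hlt
      have hcb : c ≤ φ b := by
        by_contra h
        push_neg at h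
        have := hmax b hbx₂ h.le
        rw [Fin.le_def] at this
        simp [hbdef] at this
      refine ⟨(a₀, b), ⟨hx₁a₀, ?_, hbx₂, by simp [hbdef], ha₀c, hcb⟩, rfl⟩
      rw [Fin.le_def]; simp [hbdef]
  -- every element of S climbs to p₀
  have hfirst : ∀ p ∈ Sx, p.1 ≤ a₀ := by
    rintro p ⟨_, h1, h2, _, h3, _⟩
    exact hmax p.1 (le_trans h1 h2) h3
  have hbase : ∀ p ∈ Sx, (a₀ : ℕ) ≤ (p.1 : ℕ) → Relation.ReflTransGen r p p₀ := by
    intro p hp h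
    have h1 : p.1 = a₀ := le_antisymm (hfirst p hp) (Fin.le_def.mpr h)
    refine Relation.ReflTransGen.single ⟨hp, hp₀S, ?_⟩
    rcases le_total p.2 p₀.2 with h2 | h2
    · exact Or.inr ⟨hp₀1 ▸ h1 ▸ le_refl _, h2⟩
    · exact Or.inl ⟨h1 ▸ hp₀1 ▸ le_refl _, h2⟩
  have climb : ∀ k : ℕ, ∀ p ∈ Sx, (a₀ : ℕ) - (p.1 : ℕ) ≤ k → Relation.ReflTransGen r p p₀ := by
    intro k
    induction k with
    | zero =>
      intro p hp hle
      have h1 := Fin.le_def.mp (hfirst p hp)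
      exact hbase p hp (by omega)
    | succ k ih =>
      intro p hp hle
      by_cases hcase : (a₀ : ℕ) ≤ (p.1 : ℕ)
      · exact hbase p hp hcase
      · push_neg at hcase
        have hpS : p ∈ Sx := hp
        obtain ⟨hpx₁, hp12, hpx₂, hp21, hpc1, hpc2⟩ := hpS
        have hx₂m : (x₂ : ℕ) < m + 1 := x₂.isLt
        have ha₀x₂' : (a₀ : ℕ) ≤ (x₂ : ℕ) := Fin.le_def.mp ha₀x₂
        set a' : Fin (m+1) := ⟨(p.1 : ℕ) + 1, by omega⟩ with ha'def
        have ha'a₀ : a' ≤ a₀ := by rw [Fin.le_def]; simp [ha'def]; omega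
        have ha'x₂ : a' ≤ x₂ := le_trans ha'a₀ ha₀x₂
        have hφa'c : φ a' ≤ c := le_trans (hφ ha'a₀) ha₀c
        have hp2a' : p.2 ≤ a' := by rw [Fin.le_def]; simp [ha'def]; omega
        have hcφa' : c ≤ φ a' := le_trans hpc2 (hφ hp2a')
        have hp1a' : p.1 ≤ a' := by rw [Fin.le_def]; simp [ha'def]
        have hq1 : (p.1, a') ∈ Sx :=
          ⟨hpx₁, hp1a', ha'x₂, by simp [ha'def], hpc1, hcφa'⟩
        have hq2 : (a', a') ∈ Sx :=
          ⟨le_trans hpx₁ hp1a', le_refl _, ha'x₂, Nat.le_succ _, hφa'c, hcφa'⟩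
        have step1 : r p (p.1, a') := ⟨hp, hq1, Or.inr ⟨le_refl _, hp2a'⟩⟩
        have step2 : r (p.1, a') (a', a') := ⟨hq1, hq2, Or.inl ⟨hp1a', le_refl _⟩⟩
        have htail : Relation.ReflTransGen r (a', a') p₀ :=
          ih (a', a') hq2 (by simp [ha'def]; omega)
        exact Relation.ReflTransGen.head step1 (Relation.ReflTransGen.head step2 htail)
  refine ⟨⟨p₀, hp₀S⟩, ?_⟩
  intro p hp q hq
  have h1 := climb _ p hp le_rfl
  have h2 := climb _ q hq le_rfl
  exact h1.trans (by haveI : Std.Symm r := ⟨fun a b h => hrsymm h⟩; exact Std.Symm.symm _ _ h2)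
end

section
/- Let π : E → C be a Grothendieck fibration, and let j : C₀ → C be a fully faithful functor admitting a right adjoint r : C → C₀ with counit ε : j r → id_C. Let E₀ be the (strict) pullback of π along j, with induced fully faithful functor J : E₀ → E. Then J admits a right adjoint R : E → E₀ such that for every object X ∈ E the counit J R(X) → X is a π-cartesian morphism lying over ε_{π(X)} : j r π(X) → π(X). -/
open CategoryTheory

/-- The (strict) pullback of a functor `π : E ⥤ C` along `j : C₀ ⥤ C`: pairs
`(c₀, X)` with `π(X) = j(c₀)`, viewed as a (full sub)category of `E` via the
induced category construction.  (Since `j` is fully faithful this induced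
category is isomorphic to the strict pullback.) -/
def FibPullback {C₀ C E : Type*} [Category C₀] [Category C] [Category E]
    (π : E ⥤ C) (j : C₀ ⥤ C) : Type _ :=
  InducedCategory E (fun p : {p : C₀ × E // π.obj p.2 = j.obj p.1} => p.1.2)

instance {C₀ C E : Type*} [Category C₀] [Category C] [Category E]
    (π : E ⥤ C) (j : C₀ ⥤ C) : Category (FibPullback π j) :=
  InducedCategory.instCategory

/-- The inclusion `J : E₀ ⥤ E` of the pullback. -/
def FibPullback.incl {C₀ C E : Type*} [Category C₀] [Category C] [Category E]
    (π : E ⥤ C) (j : C₀ ⥤ C) : FibPullback π j ⥤ E :=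
  inducedFunctor _

namespace FibAux

open CategoryTheory.Functor CategoryTheory.Functor.IsPreFibered Category

variable {C₀ C E : Type*} [Category C₀] [Category C] [Category E]
    (π : E ⥤ C) [π.IsFibered] (j : C₀ ⥤ C) [j.Full] [j.Faithful]
    (r : C ⥤ C₀) (adj : j ⊣ r)

/-- Chosen cartesian pullback of `X` along the counit. -/
noncomputable def P (X : E) : E :=
  pullbackObj (p := π) (rfl : π.obj X = π.obj X) (adj.counit.app (π.obj X))

/-- The chosen cartesian lift of the counit. -/
noncomputable def Pmap (X : E) : P π j r adj X ⟶ X :=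
  pullbackMap (p := π) (rfl : π.obj X = π.obj X) (adj.counit.app (π.obj X))

instance PmapCartesian (X : E) : π.IsCartesian (adj.counit.app (π.obj X)) (Pmap π j r adj X) :=
  pullbackMap.IsCartesian _ _

lemma hP (X : E) : π.obj (P π j r adj X) = j.obj (r.obj (π.obj X)) :=
  pullbackObj_proj _ _

lemma Pmap_proj (X : E) :
    π.map (Pmap π j r adj X) = eqToHom (hP π j r adj X) ≫ adj.counit.app (π.obj X) := by
  have := IsHomLift.fac' π (adj.counit.app (π.obj X)) (Pmap π j r adj X)
  simpa using this

/-- The value of the right adjoint at `X`. -/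
noncomputable def Robj (X : E) : FibPullback π j :=
  (⟨⟨r.obj (π.obj X), P π j r adj X⟩, hP π j r adj X⟩ :
    {p : C₀ × E // π.obj p.2 = j.obj p.1})

lemma base_fac (A : FibPullback π j) (X : E) (u : A.1.2 ⟶ X) :
    π.map u =
      (eqToHom A.2 ≫ j.map (adj.homEquiv A.1.1 (π.obj X) (eqToHom A.2.symm ≫ π.map u))) ≫
        adj.counit.app (π.obj X) := by
  have h := adj.homEquiv_counit
    (g := adj.homEquiv A.1.1 (π.obj X) (eqToHom A.2.symm ≫ π.map u))
  rw [Equiv.symm_apply_apply] at h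
  rw [Category.assoc, ← h]
  simp

/-- The adjoint transpose of `u : A ⟶ X`. -/
noncomputable def transpose (A : FibPullback π j) (X : E) (u : A.1.2 ⟶ X) :
    A.1.2 ⟶ P π j r adj X :=
  IsStronglyCartesian.map π (adj.counit.app (π.obj X)) (Pmap π j r adj X)
    (base_fac π j r adj A X u) u

@[simp]
lemma transpose_fac (A : FibPullback π j) (X : E) (u : A.1.2 ⟶ X) :
    transpose π j r adj A X u ≫ Pmap π j r adj X = u :=
  IsStronglyCartesian.fac π _ _ _ _

lemma base_eq (A : FibPullback π j) (X : E) (w : A.1.2 ⟶ P π j r adj X) :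
    eqToHom A.2 ≫
        j.map (adj.homEquiv A.1.1 (π.obj X)
          (eqToHom A.2.symm ≫ π.map (w ≫ Pmap π j r adj X))) =
      π.map w ≫ eqToHom (hP π j r adj X) := by
  have harg : eqToHom A.2.symm ≫ π.map (w ≫ Pmap π j r adj X) =
      j.map (j.preimage (eqToHom A.2.symm ≫ π.map w ≫ eqToHom (hP π j r adj X))) ≫
        adj.counit.app (π.obj X) := by
    rw [j.map_preimage]
    simp [Pmap_proj π j r adj X]
  have h := adj.homEquiv_counit
    (g := j.preimage (eqToHom A.2.symm ≫ π.map w ≫ eqToHom (hP π j r adj X)))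
  rw [harg, ← h, Equiv.apply_symm_apply, j.map_preimage]
  simp

lemma transpose_inv (A : FibPullback π j) (X : E) (w : A.1.2 ⟶ P π j r adj X) :
    transpose π j r adj A X (w ≫ Pmap π j r adj X) = w := by
  symm
  haveI : π.IsHomLift
      (eqToHom A.2 ≫ j.map (adj.homEquiv A.1.1 (π.obj X)
          (eqToHom A.2.symm ≫ π.map (w ≫ Pmap π j r adj X)))) w := by
    rw [base_eq π j r adj A X w]
    exact IsHomLift.of_fac' π _ w rfl (hP π j r adj X) (by simp)
  exact IsStronglyCartesian.map_uniq π _ _ _ _ w rfl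

lemma transpose_natural (A' A : FibPullback π j) (X : E) (f : A'.1.2 ⟶ A.1.2)
    (g : A.1.2 ⟶ X) :
    transpose π j r adj A' X (f ≫ g) = f ≫ transpose π j r adj A X g := by
  symm
  have hbase : eqToHom A'.2 ≫ j.map (adj.homEquiv A'.1.1 (π.obj X)
        (eqToHom A'.2.symm ≫ π.map (f ≫ g))) =
      π.map f ≫ eqToHom A.2 ≫ j.map (adj.homEquiv A.1.1 (π.obj X)
        (eqToHom A.2.symm ≫ π.map g)) := by
    have harg : eqToHom A'.2.symm ≫ π.map (f ≫ g) =
        j.map (j.preimage (eqToHom A'.2.symm ≫ π.map f ≫ eqToHom A.2)) ≫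
          (eqToHom A.2.symm ≫ π.map g) := by
      rw [j.map_preimage]; simp
    rw [harg, Adjunction.homEquiv_naturality_left, j.map_comp, j.map_preimage]
    simp
  haveI h1 : π.IsHomLift
      (eqToHom A.2 ≫ j.map (adj.homEquiv A.1.1 (π.obj X) (eqToHom A.2.symm ≫ π.map g)))
      (transpose π j r adj A X g) :=
    IsStronglyCartesian.map_isHomLift π _ _ _ _
  haveI : π.IsHomLift
      (eqToHom A'.2 ≫ j.map (adj.homEquiv A'.1.1 (π.obj X)
        (eqToHom A'.2.symm ≫ π.map (f ≫ g))))
      (f ≫ transpose π j r adj A X g) := by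
    rw [hbase]
    infer_instance
  exact IsStronglyCartesian.map_uniq π _ _ _ _ _ (by simp)

/-- The hom-set equivalence. -/
noncomputable def e (A : FibPullback π j) (X : E) :
    ((FibPullback.incl π j).obj A ⟶ X) ≃ (A ⟶ Robj π j r adj X) where
  toFun u := InducedCategory.homMk (transpose π j r adj A X u)
  invFun w := w.hom ≫ Pmap π j r adj X
  left_inv u := transpose_fac π j r adj A X u
  right_inv w := InducedCategory.hom_ext (transpose_inv π j r adj A X w.hom)

end FibAux

/-- Let `π : E ⥤ C` be a Grothendieck fibration and `j : C₀ ⥤ C` a fully faithful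
functor with right adjoint `r`, with counit `ε : j ⋙ r ⟶ 𝟭 C`.  Then the inclusion
`J : E₀ ⥤ E` of the pullback of `π` along `j` admits a right adjoint `R` such that
for every `X ∈ E` the counit `J R X ⟶ X` is a `π`-cartesian morphism lying over
`ε_{π X} : j r π X ⟶ π X`. -/
theorem fibPullback_hasRightAdjoint {C₀ C E : Type*}
    [Category C₀] [Category C] [Category E]
    (π : E ⥤ C) [π.IsFibered] (j : C₀ ⥤ C) [j.Full] [j.Faithful]
    (r : C ⥤ C₀) (adj : j ⊣ r) :
    ∃ (R : E ⥤ FibPullback π j) (adj' : FibPullback.incl π j ⊣ R),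
      ∀ X : E,
        π.IsStronglyCartesian (adj.counit.app (π.obj X)) (adj'.counit.app X) := by
  have he : ∀ (A' A : FibPullback π j) (X : E) (f : A' ⟶ A)
      (g : (FibPullback.incl π j).obj A ⟶ X),
      FibAux.e π j r adj A' X ((FibPullback.incl π j).map f ≫ g) =
        f ≫ FibAux.e π j r adj A X g :=
    fun A' A X f g => InducedCategory.hom_ext (FibAux.transpose_natural π j r adj A' A X f.hom g)
  refine ⟨Adjunction.rightAdjointOfEquiv (FibAux.e π j r adj) he,
    Adjunction.adjunctionOfEquivRight (FibAux.e π j r adj) he, fun X => ?_⟩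
  have hc : (Adjunction.adjunctionOfEquivRight (FibAux.e π j r adj) he).counit.app X =
      FibAux.Pmap π j r adj X := by
    show (FibAux.e π j r adj _ X).symm (𝟙 _) = _
    show 𝟙 _ ≫ FibAux.Pmap π j r adj X = _
    simp
  rw [hc]
  haveI := FibAux.PmapCartesian π j r adj X
  exact Functor.IsFibered.isStronglyCartesian_of_isCartesian π _ (FibAux.Pmap π j r adj X)
end
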